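/- Let L be a bounded chain. Every nondecreasing weakly median decomposable function f : L^n → L is a lattice polynomial function, i.e., there exists α : 2^{[n]} → L such that f(x) = ⋁_{I⊆[n]} (α(I) ∧ ⋀_{i∈I} x_i) for all x ∈ L^n. -/

import Mathlib

/-- Ternary median. -/
def med3 {L : Type*} [Lattice L] (a b c : L) : L := (a ⊔ b) ⊓ (b ⊔ c) ⊓ (c ⊔ a)

/-- The set L_n^{(p,q)} = {x ∈ L^n : |{x_1,...,x_n} ∩ {0,1}| ≥ p and |{x_1,...,x_n}| ≤ q}. -/
def Lpq (L : Type*) [LinearOrder L] [BoundedOrder L] (n p q : ℕ) : Set (Fin n → L) :=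
  {x | p ≤ ((Finset.univ.image x) ∩ ({⊥, ⊤} : Finset L)).card ∧
      (Finset.univ.image x).card ≤ q}


lemma med3_eq_clamp {L : Type*} [LinearOrder L] {a b c : L} (h : a ≤ b) :
    med3 a c b = a ⊔ (c ⊓ b) := by
  unfold med3
  rcases le_total c a with h1 | h1 <;> rcases le_total c b with h2 | h2 <;>
    simp_all [max_def, min_def]

lemma med3_self {L : Type*} [Lattice L] (a c : L) : med3 a c a = a := by
  simp [med3, inf_comm]

lemma med3_le_sup {L : Type*} [Lattice L] (a c b : L) : med3 a c b ≤ a ⊔ c := by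
  unfold med3; exact inf_le_of_left_le inf_le_left

lemma inf_le_med3 {L : Type*} [Lattice L] (a c b : L) : c ⊓ b ≤ med3 a c b := by
  unfold med3
  exact le_inf (le_inf (le_sup_of_le_right inf_le_left)
    (le_sup_of_le_left inf_le_left)) (le_sup_of_le_left inf_le_right)

lemma med3_comp {L : Type*} [LinearOrder L] {a a' a'' b c : L}
    (h1 : a ≤ a') (h2 : a' ≤ b) (h3 : a ≤ a'') (h4 : a'' ≤ b) :
    med3 (med3 a c a') c (med3 a'' c b) = med3 a c b := by
  have hab : a ≤ b := le_trans h1 h2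
  have huv : a ⊔ (c ⊓ a') ≤ a'' ⊔ (c ⊓ b) :=
    sup_le_sup h3 (inf_le_inf_left c h2)
  rw [med3_eq_clamp h1, med3_eq_clamp h4, med3_eq_clamp hab, med3_eq_clamp huv]
  apply le_antisymm
  · apply sup_le
    · exact sup_le le_sup_left (le_sup_of_le_right (inf_le_inf_left c h2))
    · rw [inf_sup_left]
      apply sup_le
      · exact le_sup_of_le_right (inf_le_inf_left c h4)
      · exact le_sup_of_le_right inf_le_right
  · apply sup_le
    · exact le_sup_of_le_left le_sup_left
    · exact le_sup_of_le_right (le_inf inf_le_left le_sup_right)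

/-- the 0/1 tuple with ⊤ on I -/
def eI {L : Type*} [LinearOrder L] [BoundedOrder L] {n : ℕ} (I : Finset (Fin n)) :
    Fin n → L := fun i => if i ∈ I then ⊤ else ⊥

lemma eI_mono {L : Type*} [LinearOrder L] [BoundedOrder L] {n : ℕ}
    {A B : Finset (Fin n)} (h : A ⊆ B) : (eI A : Fin n → L) ≤ eI B := by
  intro i
  by_cases hi : i ∈ A
  · simp [eI, hi, h hi]
  · simp [eI, hi]

lemma mem_dom {L : Type*} [LinearOrder L] [BoundedOrder L] {n : ℕ}
    (c : L) (z : Fin n → L) (hz : ∀ i, z i = ⊥ ∨ z i = c ∨ z i = ⊤) :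
    z ∈ Lpq L n 0 2 ∪ Lpq L n 1 3 := by
  by_cases h : ∃ i, z i = ⊥ ∨ z i = ⊤
  · right
    obtain ⟨i, hi⟩ := h
    constructor
    · rw [Nat.succ_le_iff, Finset.card_pos]
      refine ⟨z i, Finset.mem_inter.mpr ⟨Finset.mem_image_of_mem z (Finset.mem_univ i), ?_⟩⟩
      rcases hi with h' | h' <;> simp [h']
    · have himg : Finset.univ.image z ⊆ {⊥, c, ⊤} := by
        intro v hv
        obtain ⟨j, _, hj⟩ := Finset.mem_image.mp hv
        rcases hz j with h' | h' | h' <;> simp [← hj, h']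
      refine le_trans (Finset.card_le_card himg) ?_
      refine le_trans (Finset.card_insert_le _ _) ?_
      have h2 := Finset.card_insert_le c ({⊤} : Finset L)
      simp only [Finset.card_singleton] at h2 ⊢
      omega
  · left
    push_neg at h
    refine ⟨Nat.zero_le _, ?_⟩
    have himg : Finset.univ.image z ⊆ {c} := by
      intro v hv
      obtain ⟨j, _, hj⟩ := Finset.mem_image.mp hv
      rcases hz j with h' | h' | h'
      · exact absurd h' (h j).1
      · simp [← hj, h']
      · exact absurd h' (h j).2
    exact le_trans (Finset.card_le_card himg) (by simp)

lemma key {L : Type*} [LinearOrder L] [BoundedOrder L] {n : ℕ}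
    (f : (Fin n → L) → L) (hmono : Monotone f)
    (hmed : ∀ x ∈ Lpq L n 0 2 ∪ Lpq L n 1 3, ∀ k : Fin n,
      f x = med3 (f (Function.update x k ⊥)) (x k) (f (Function.update x k ⊤)))
    (c : L) (B A : Finset (Fin n)) (hAB : Disjoint A B) :
    f (fun i => if i ∈ A then ⊤ else if i ∈ B then c else ⊥)
      = med3 (f (eI A)) c (f (eI (A ∪ B))) := by
  induction B using Finset.induction_on generalizing A with
  | empty =>
    have : (fun i => if i ∈ A then ⊤ else if i ∈ (∅ : Finset (Fin n)) then c else ⊥)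
        = (eI A : Fin n → L) := by
      funext i; simp [eI]
    rw [this, Finset.union_empty, med3_self]
  | @insert k B' hk ih =>
    have hkA : k ∉ A := fun hkA => (Finset.disjoint_left.mp hAB hkA) (Finset.mem_insert_self k B')
    have hAB' : Disjoint A B' := hAB.mono_right (Finset.subset_insert k B')
    have hA'B' : Disjoint (insert k A) B' := by
      rw [Finset.disjoint_left]
      intro i hi hiB'
      rcases Finset.mem_insert.mp hi with rfl | hiA
      · exact hk hiB'
      · exact Finset.disjoint_left.mp hAB' hiA hiB'
    set z : Fin n → L := fun i => if i ∈ A then ⊤ else if i ∈ insert k B' then c else ⊥ with hzdef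
    have hz : ∀ i, z i = ⊥ ∨ z i = c ∨ z i = ⊤ := by
      intro i; simp only [hzdef]; split_ifs <;> simp
    have hz1 : Function.update z k ⊥
        = fun i => if i ∈ A then ⊤ else if i ∈ B' then c else ⊥ := by
      funext i
      rcases eq_or_ne i k with rfl | hik
      · simp [Function.update_self, hkA, hk]
      · simp [Function.update_of_ne hik, hzdef, Finset.mem_insert, hik]
    have hz2 : Function.update z k ⊤
        = fun i => if i ∈ insert k A then ⊤ else if i ∈ B' then c else ⊥ := by
      funext i
      rcases eq_or_ne i k with rfl | hik
      · simp [Function.update_self]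
      · simp [Function.update_of_ne hik, hzdef, Finset.mem_insert, hik]
    have hzk : z k = c := by simp [hzdef, hkA]
    have h0 := hmed z (mem_dom c z hz) k
    rw [hzk, hz1, hz2, ih A hAB', ih (insert k A) hA'B'] at h0
    rw [h0]
    have e1 : insert k A ∪ B' = A ∪ insert k B' := by
      rw [Finset.insert_union, Finset.union_insert]
    rw [e1]
    exact med3_comp (hmono (eI_mono Finset.subset_union_left))
      (hmono (eI_mono (Finset.union_subset_union_right (Finset.subset_insert k B'))))
      (hmono (eI_mono (Finset.subset_insert k A)))
      (hmono (eI_mono (by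
        rw [← e1]
        exact Finset.subset_union_left)))

/-- every nondecreasing weakly median decomposable function on a
bounded chain is a lattice polynomial function. -/
theorem stmt8 {L : Type*} [LinearOrder L] [BoundedOrder L] {n : ℕ}
    (f : (Fin n → L) → L) (hmono : Monotone f)
    (hmed : ∀ x ∈ Lpq L n 0 2 ∪ Lpq L n 1 3, ∀ k : Fin n,
      f x = med3 (f (Function.update x k ⊥)) (x k) (f (Function.update x k ⊤))) :
    ∃ α : Finset (Fin n) → L, ∀ x,
      f x = (Finset.univ : Finset (Fin n)).powerset.sup (fun I => α I ⊓ I.inf x) := by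
  refine ⟨fun I => f (eI I), fun x => ?_⟩
  apply le_antisymm
  · -- upper bound
    set c := (Finset.univ : Finset (Fin n)).powerset.sup
      (fun I => f (eI I) ⊓ I.inf x) with hc
    rcases eq_or_ne c ⊤ with hctop | hctop
    · rw [hctop]; exact le_top
    set A : Finset (Fin n) := Finset.univ.filter (fun i => c < x i) with hA
    have hxz : x ≤ fun i => if i ∈ A then ⊤ else if i ∈ Aᶜ then c else ⊥ := by
      intro i
      by_cases hi : i ∈ A
      · simp [hi]
      · have : x i ≤ c := not_lt.mp (by simpa [hA] using hi)
        simp [hi, this]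
    have hkey := key f hmono hmed c Aᶜ A disjoint_compl_right
    have hfeA : f (eI A) ≤ c := by
      have h5 : f (eI A) ⊓ A.inf x ≤ c := by
        rw [hc]
        exact Finset.le_sup (f := fun I => f (eI I) ⊓ I.inf x)
          (Finset.mem_powerset.mpr (Finset.subset_univ A))
      have h6 : c < A.inf x := by
        rw [Finset.lt_inf_iff (lt_top_iff_ne_top.mpr hctop)]
        intro i hi
        simpa [hA] using hi
      rcases le_total (f (eI A)) (A.inf x) with h | h
      · rwa [inf_eq_left.mpr h] at h5
      · rw [inf_eq_right.mpr h] at h5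
        exact absurd h5 (not_le.mpr h6)
    calc f x ≤ f (fun i => if i ∈ A then ⊤ else if i ∈ Aᶜ then c else ⊥) := hmono hxz
      _ = med3 (f (eI A)) c (f (eI (A ∪ Aᶜ))) := hkey
      _ ≤ f (eI A) ⊔ c := med3_le_sup _ _ _
      _ ≤ c := sup_le hfeA le_rfl
  · -- lower bound
    apply Finset.sup_le
    intro I _
    rcases I.eq_empty_or_nonempty with rfl | hI
    · simp only [Finset.inf_empty, inf_top_eq]
      exact hmono (fun i => by simp [eI])
    · set c := I.inf x with hcI
      have hkey := key f hmono hmed c I ∅ (Finset.disjoint_left.mpr (by simp))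
      simp only [Finset.notMem_empty, if_false, Finset.empty_union] at hkey
      have hzx : (fun i => if i ∈ I then c else ⊥) ≤ x := by
        intro i
        by_cases hi : i ∈ I
        · simp only [hi, if_true]
          exact Finset.inf_le hi
        · simp [hi]
      calc f (eI I) ⊓ I.inf x = c ⊓ f (eI I) := by rw [inf_comm, hcI]
        _ ≤ med3 (f (eI ∅)) c (f (eI I)) := inf_le_med3 _ _ _
        _ = f (fun i => if i ∈ I then c else ⊥) := hkey.symm
        _ ≤ f x := hmono hzx
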